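/- Let k ≥ 2 be an integer, let β₁,…,β_k ≥ 0 and γ₁,…,γ_k ∈ ℝ with |γ_i| ≤ β_i for all i. Fix an integer j ∈ {1,…,⌊k/2⌋} and set μ = j/k. Let (X₁,…,X_k) ∈ {±1}^k be sampled uniformly from the set {(x₁,…,x_k) ∈ {±1}^k : Σ_{i=1}^k (x_i + 1)/2 = μk}. Define Y_i = β_i + X_i γ_i and α_i = β_i + |γ_i|, and assume Σ_{i=1}^k α_i = 1. Then for every ε > 0, P[Σ_{i=1}^k Y_i ≤ μ − ε] ≤ 2·exp(−ε²/(2·Σ_{i=1}^k α_i²)). -/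

import Mathlib

open MeasureTheory
open scoped ENNReal

noncomputable def argmaxFin {k : ℕ} [NeZero k] (f : Fin k → ℝ) : Fin k :=
  (Finset.univ.filter fun i => ∀ j, f j ≤ f i).min' (by
    obtain ⟨i, -, hi⟩ := Finset.exists_max_image (Finset.univ : Finset (Fin k)) f
      ⟨⟨0, Nat.pos_of_ne_zero (NeZero.ne k)⟩, Finset.mem_univ _⟩
    exact ⟨i, Finset.mem_filter.mpr ⟨Finset.mem_univ _, fun j => hi j (Finset.mem_univ _)⟩⟩)

def aug {d : ℕ} (x : Fin d → ℝ) : Fin (d + 1) → ℝ := Fin.snoc x 1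

/-- halfspaces over ℝ^d, `true` ↔ +1, sign(0) = 1 -/
def halfspace (d : ℕ) : Set ((Fin d → ℝ) → Bool) :=
  { h | ∃ w : Fin (d + 1) → ℝ, h = fun x => decide (0 ≤ ∑ i, w i * aug x i) }

noncomputable def msvm (d k : ℕ) [NeZero k] : Set ((Fin d → ℝ) → Fin k) :=
  { h | ∃ W : Fin k → Fin (d + 1) → ℝ,
      h = fun x => argmaxFin (fun i => ∑ j, W i j * aug x j) }

def NShatters {X Y : Type*} (H : Set (X → Y)) (S : Set X) : Prop :=
  ∃ f₁ f₂ : X → Y, (∀ x ∈ S, f₁ x ≠ f₂ x) ∧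
    ∀ T ⊆ S, ∃ g ∈ H, (∀ x ∈ T, g x = f₁ x) ∧ ∀ x ∈ S \ T, g x = f₂ x

def GShatters {X Y : Type*} (H : Set (X → Y)) (S : Set X) : Prop :=
  ∃ f : X → Y, ∀ T ⊆ S, ∃ g ∈ H, (∀ x ∈ T, g x = f x) ∧ ∀ x ∈ S \ T, g x ≠ f x

def VCDimLE {X : Type*} (H : Set (X → Bool)) (d : ℕ) : Prop :=
  ∀ S : Finset X, (∀ b : X → Bool, ∃ h ∈ H, ∀ x ∈ S, h x = b x) → S.card ≤ d

inductive LTree (k : ℕ) : Type where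
  | leaf : Fin k → LTree k
  | node : LTree k → LTree k → LTree k

def LTree.labels {k : ℕ} : LTree k → List (Fin k)
  | .leaf i => [i]
  | .node l r => l.labels ++ r.labels

/-- `T` is a tree for `k` classes: its leaf labels form a bijection with `[k]`. -/
def LTree.IsTreeFor {k : ℕ} (T : LTree k) : Prop := T.labels.Perm (List.finRange k)

def treeClass {X : Type*} {k : ℕ} (H : Set (X → Bool)) : LTree k → Set (X → Fin k)
  | .leaf i => {fun _ => i}
  | .node l r => { f | ∃ c ∈ H, ∃ fl ∈ treeClass H l, ∃ fr ∈ treeClass H r,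
      f = fun x => if c x then fr x else fl x }

def treesClass {X : Type*} (H : Set (X → Bool)) (k : ℕ) : Set (X → Fin k) :=
  ⋃ T ∈ { T : LTree k | T.IsTreeFor }, treeClass H T

noncomputable def decode {k : ℕ} [NeZero k] {J : Type*} [Fintype J]
    (M : Fin k → J → ℝ) (u : J → Bool) : Fin k :=
  argmaxFin (fun i => ∑ j, M i j * (if u j then (1 : ℝ) else -1))

noncomputable def ecocClass {X : Type*} {k : ℕ} [NeZero k] {J : Type*} [Fintype J]
    (H : Set (X → Bool)) (M : Fin k → J → ℝ) : Set (X → Fin k) :=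
  { g | ∃ h : J → X → Bool, (∀ j, h j ∈ H) ∧ g = fun x => decode M (fun j => h j x) }

def ovaCode (k : ℕ) : Fin k → Fin k → ℝ := fun i j => if i = j then 1 else -1

def apCode (k : ℕ) : Fin k → { p : Fin k × Fin k // p.1 < p.2 } → ℝ :=
  fun i p => if i = p.1.1 then -1 else if i = p.1.2 then 1 else 0

noncomputable def errStar {X : Type*} [MeasurableSpace X] {k : ℕ}
    (D : Measure (X × Fin k)) (H : Set (X → Fin k)) : ℝ≥0∞ :=
  ⨅ h ∈ H, D { p | h p.1 ≠ p.2 }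

noncomputable def errStarBin {X : Type*} [MeasurableSpace X]
    (Q : Measure (X × Bool)) (H : Set (X → Bool)) : ℝ≥0∞ :=
  ⨅ h ∈ H, Q { p | h p.1 ≠ p.2 }

inductive PTree : Type where
  | leaf : PTree
  | node : PTree → PTree → PTree

def PTree.nLeaves : PTree → ℕ
  | .leaf => 1
  | .node l r => l.nLeaves + r.nLeaves

def PTree.leftLeaves : PTree → ℕ
  | .leaf => 0
  | .node l _ => l.nLeaves

def PTree.rightLeaves : PTree → ℕ
  | .leaf => 0
  | .node _ r => r.nLeaves

def PTree.labelAux {k : ℕ} (f : ℕ → Fin k) : PTree → ℕ → LTree k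
  | .leaf, n => .leaf (f n)
  | .node l r, n => .node (PTree.labelAux f l n) (PTree.labelAux f r (n + l.nLeaves))



section Stmt19Aux
open Finset

lemma Dpos {p : ℝ} (hp0 : 0 ≤ p) (hp1 : p ≤ 1) (x : ℝ) : 0 < 1 - p + p * Real.exp x := by
  rcases eq_or_lt_of_le hp0 with h | h
  · simp [← h]
  · have := Real.exp_pos x
    nlinarith

lemma hoeff14 {p : ℝ} (hp0 : 0 ≤ p) (hp1 : p ≤ 1) (x : ℝ) :
    p * Real.exp x + (1 - p) ≤ Real.exp (p * x + x ^ 2 / 4) := by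
  set D : ℝ → ℝ := fun x => 1 - p + p * Real.exp x with hD
  have hDpos : ∀ x, 0 < D x := fun x => Dpos hp0 hp1 x
  set q : ℝ → ℝ := fun x => p * Real.exp x / D x with hq
  have hq0 : ∀ x, 0 ≤ q x := fun x => by
    have := (hDpos x).le
    positivity
  have hq1 : ∀ x, q x ≤ 1 := fun x => by
    rw [hq, div_le_one (hDpos x)]
    simp [hD]; linarith
  have hDderiv : ∀ x, HasDerivAt D (p * Real.exp x) x := by
    intro x
    exact ((Real.hasDerivAt_exp x).const_mul p).const_add (1 - p)
  have hqderiv : ∀ x, HasDerivAt q (q x * (1 - q x)) x := by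
    intro x
    have h := ((Real.hasDerivAt_exp x).const_mul p).div (hDderiv x) (hDpos x).ne'
    refine h.congr_deriv ?_
    have hd := (hDpos x).ne'
    simp only [hq]
    field_simp
  -- φ x = p + x/4 - q x is monotone
  set φ : ℝ → ℝ := fun x => p + x / 4 - q x with hφ
  have hφderiv : ∀ x, HasDerivAt φ (1 / 4 - q x * (1 - q x)) x := by
    intro x
    exact ((hasDerivAt_id x).div_const 4).const_add p |>.sub (hqderiv x)
  have hφmono : Monotone φ := by
    apply monotone_of_deriv_nonneg
    · exact fun x => (hφderiv x).differentiableAt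
    · intro x
      rw [(hφderiv x).deriv]
      nlinarith [hq0 x, hq1 x, sq_nonneg (q x - 1/2)]
  have hφ0 : φ 0 = 0 := by
    simp [hφ, hq, hD]
  -- h x = p x + x^2/4 - log (D x)
  set h : ℝ → ℝ := fun x => p * x + x ^ 2 / 4 - Real.log (D x) with hh
  have hhderiv : ∀ x, HasDerivAt h (p + x / 2 - q x) x := by
    intro x
    have hlog : HasDerivAt (fun x => Real.log (D x)) (p * Real.exp x / D x) x :=
      (hDderiv x).log (hDpos x).ne'
    have h1 : HasDerivAt (fun x => p * x + x ^ 2 / 4) (p + 2 * x / 4) x := by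
      refine (((hasDerivAt_id x).const_mul p).add
        (((hasDerivAt_pow 2 x)).div_const 4)).congr_deriv ?_
      norm_num
    refine (h1.sub hlog).congr_deriv ?_
    simp only [hq]; ring
  have hmono : MonotoneOn h (Set.Ici 0) := by
    apply monotoneOn_of_deriv_nonneg (convex_Ici 0)
    · exact Continuous.continuousOn (by
        fun_prop (disch := intro x; exact (hDpos x).ne'))
    · intro x _
      exact (hhderiv x).differentiableAt.differentiableWithinAt
    · intro x hx
      rw [interior_Ici] at hx
      rw [(hhderiv x).deriv]
      have : φ 0 ≤ φ x := hφmono (le_of_lt hx)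
      rw [hφ0] at this
      simp only [hφ] at this
      linarith [le_of_lt (Set.mem_Ioi.mp hx)]
  have hanti : AntitoneOn h (Set.Iic 0) := by
    apply antitoneOn_of_deriv_nonpos (convex_Iic 0)
    · exact Continuous.continuousOn (by
        fun_prop (disch := intro x; exact (hDpos x).ne'))
    · intro x _
      exact (hhderiv x).differentiableAt.differentiableWithinAt
    · intro x hx
      rw [interior_Iic] at hx
      rw [(hhderiv x).deriv]
      have : φ x ≤ φ 0 := hφmono (le_of_lt hx)
      rw [hφ0] at this
      simp only [hφ] at this
      have hx' : x < 0 := hx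
      linarith
  have h0 : h 0 = 0 := by simp [hh, hD]
  have hhn : ∀ x, 0 ≤ h x := by
    intro x
    rcases le_total 0 x with hx | hx
    · have := hmono (Set.self_mem_Ici) hx hx
      rw [h0] at this; exact this
    · have := hanti hx (Set.self_mem_Iic) hx
      rw [h0] at this; exact this
  have := hhn x
  rw [hh] at this
  have hle : Real.log (D x) ≤ p * x + x ^ 2 / 4 := by linarith
  have := (Real.log_le_iff_le_exp (hDpos x)).mp hle
  calc p * Real.exp x + (1 - p) = D x := by rw [hD]; ring
    _ ≤ _ := this

lemma binom_ineq (k j : ℕ) (hk : 0 < k) (hjk : j < k) :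
    ∀ t, t ≤ j → ((k - t).choose (j - t) : ℝ) ≤ (k.choose j : ℝ) * ((j : ℝ) / k) ^ t := by
  intro t
  induction t with
  | zero => simp
  | succ t ih =>
    intro ht
    have ht' : t ≤ j := Nat.le_of_succ_le ht
    have h1 : t + 1 ≤ j := ht
    have hkt : t + 1 < k := lt_of_le_of_lt h1 hjk
    -- nat identity : (k - t) * choose (k - t - 1) (j - t - 1) = choose (k - t) (j - t) * (j - t)
    have hnat : (k - t) * Nat.choose (k - t - 1) (j - t - 1) = Nat.choose (k - t) (j - t) * (j - t) := by
      have h2 : k - t = (k - t - 1) + 1 := by omega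
      have h3 : j - t = (j - t - 1) + 1 := by omega
      rw [h2, h3]
      exact Nat.add_one_mul_choose_eq _ _
    have hktpos : (0 : ℝ) < (k - t : ℕ) := by
      have : 0 < k - t := by omega
      exact_mod_cast this
    have hkpos : (0 : ℝ) < (k : ℕ) := by exact_mod_cast hk
    have hreal : ((k - (t+1)).choose (j - (t+1)) : ℝ)
        = ((k - t).choose (j - t) : ℝ) * ((j - t : ℕ) : ℝ) / ((k - t : ℕ) : ℝ) := by
      rw [eq_div_iff hktpos.ne']
      have h4 : k - (t+1) = k - t - 1 := by omega
      have h5 : j - (t+1) = j - t - 1 := by omega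
      rw [h4, h5]
      rw [mul_comm]
      exact_mod_cast hnat
    rw [hreal]
    have hfrac : ((j - t : ℕ) : ℝ) / ((k - t : ℕ) : ℝ) ≤ (j : ℝ) / k := by
      rw [div_le_div_iff₀ hktpos hkpos]
      have hc1 : ((j - t : ℕ) : ℝ) = (j : ℝ) - t := by
        have : t ≤ j := ht'
        push_cast [this]; ring
      have hc2 : ((k - t : ℕ) : ℝ) = (k : ℝ) - t := by
        have : t ≤ k := by omega
        push_cast [this]; ring
      rw [hc1, hc2]
      have hjk' : (j : ℝ) ≤ k := by exact_mod_cast hjk.le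
      have htn : (0:ℝ) ≤ t := by positivity
      nlinarith
    have hIH := ih ht'
    have hnn : (0:ℝ) ≤ ((j - t : ℕ) : ℝ) / ((k - t : ℕ) : ℝ) := by positivity
    have hnn2 : (0:ℝ) ≤ ((k - t).choose (j - t) : ℝ) := by positivity
    calc ((k - t).choose (j - t) : ℝ) * ((j - t : ℕ) : ℝ) / ((k - t : ℕ) : ℝ)
        = ((k - t).choose (j - t) : ℝ) * (((j - t : ℕ) : ℝ) / ((k - t : ℕ) : ℝ)) := by ring
      _ ≤ ((k.choose j : ℝ) * ((j : ℝ) / k) ^ t) * ((j : ℝ) / k) := by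
          apply mul_le_mul hIH hfrac hnn
          positivity
      _ = (k.choose j : ℝ) * ((j : ℝ) / k) ^ (t + 1) := by ring

lemma card_supersets {k j : ℕ} (t : Finset (Fin k)) (ht : t.card ≤ j) :
    (((Finset.univ : Finset (Fin k)).powersetCard j).filter (fun S => t ⊆ S)).card
      = (k - t.card).choose (j - t.card) := by
  have h1 : (tᶜ.powersetCard (j - t.card)).card = (k - t.card).choose (j - t.card) := by
    rw [card_powersetCard, card_compl, Fintype.card_fin]
  rw [← h1]
  apply Finset.card_bij' (fun S _ => S \ t) (fun u _ => u ∪ t)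
  · intro S hS
    simp only [mem_filter, mem_powersetCard] at hS
    obtain ⟨⟨-, hcard⟩, hts⟩ := hS
    simp only [mem_powersetCard]
    constructor
    · intro x hx
      simp only [mem_sdiff] at hx
      simp [mem_compl, hx.2]
    · rw [card_sdiff_of_subset hts, hcard]
  · intro u hu
    simp only [mem_powersetCard] at hu
    obtain ⟨hsub, hcard⟩ := hu
    have hdisj : Disjoint u t := by
      rw [Finset.disjoint_left]
      intro x hx hxt
      have := hsub hx
      simp [mem_compl] at this
      exact this hxt
    simp only [mem_filter, mem_powersetCard]
    refine ⟨⟨subset_univ _, ?_⟩, subset_union_right⟩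
    rw [card_union_of_disjoint hdisj, hcard]
    omega
  · intro S hS
    simp only [mem_filter, mem_powersetCard] at hS
    exact sdiff_union_of_subset hS.2
  · intro u hu
    simp only [mem_powersetCard] at hu
    apply union_sdiff_cancel_right
    rw [Finset.disjoint_left]
    intro x hx hxt
    have := hu.1 hx
    simp [mem_compl] at this
    exact this hxt

lemma lemmaM {k j : ℕ} (hk : 0 < k) (hjk : j < k) (z : Fin k → ℝ) (hz : ∀ i, 1 ≤ z i) :
    ∑ S ∈ (Finset.univ : Finset (Fin k)).powersetCard j, ∏ i ∈ S, z i
      ≤ (k.choose j : ℝ) * ∏ i, (((j : ℝ) / k) * z i + (1 - (j : ℝ) / k)) := by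
  set μ : ℝ := (j : ℝ) / k with hμ
  set y : Fin k → ℝ := fun i => z i - 1 with hy
  have hy0 : ∀ i, 0 ≤ y i := fun i => by simp [hy]; linarith [hz i]
  -- expand LHS
  have hexp : ∀ S : Finset (Fin k), ∏ i ∈ S, z i = ∑ T ∈ S.powerset, ∏ i ∈ T, y i := by
    intro S
    have : ∀ i ∈ S, z i = y i + 1 := fun i _ => by simp [hy]
    rw [Finset.prod_congr rfl this, Finset.prod_add]
    simp
  -- expand RHS product
  have hrhs : ∏ i, (μ * z i + (1 - μ)) = ∑ T ∈ (Finset.univ : Finset (Fin k)).powerset,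
      μ ^ T.card * ∏ i ∈ T, y i := by
    have : ∀ i : Fin k, μ * z i + (1 - μ) = μ * y i + 1 := fun i => by simp [hy]; ring
    rw [Finset.prod_congr rfl (fun i _ => this i), Finset.prod_add]
    apply Finset.sum_congr rfl
    intro T _
    simp [Finset.prod_mul_distrib]
  simp only [hexp]
  rw [hrhs, Finset.mul_sum]
  -- swap sums
  rw [Finset.sum_comm' (s' := fun T => ((Finset.univ : Finset (Fin k)).powersetCard j).filter
      (fun S => T ⊆ S)) (t' := (Finset.univ : Finset (Fin k)).powerset) (by
    intro S T
    simp only [mem_powersetCard, mem_powerset, mem_filter, mem_univ, subset_univ, true_and,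
      and_true] <;> tauto) (f := fun _ T => ∏ i ∈ T, y i)]
  apply Finset.sum_le_sum
  intro T _
  rw [Finset.sum_const, nsmul_eq_mul]
  by_cases hT : T.card ≤ j
  · rw [card_supersets T hT]
    rw [← mul_assoc]
    exact mul_le_mul_of_nonneg_right (binom_ineq k j hk hjk T.card hT)
      (Finset.prod_nonneg fun i _ => hy0 i)
  · have : ((Finset.univ : Finset (Fin k)).powersetCard j).filter (fun S => T ⊆ S) = ∅ := by
      apply Finset.filter_false_of_mem
      intro S hS
      simp only [mem_powersetCard] at hS
      intro hsub
      exact hT (hS.2 ▸ Finset.card_le_card hsub)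
    rw [this]
    simp only [Finset.card_empty, Nat.cast_zero, zero_mul]
    have h1 : (0:ℝ) ≤ μ := by positivity
    have h2 : (0:ℝ) ≤ ∏ i ∈ T, y i := Finset.prod_nonneg fun i _ => hy0 i
    positivity

lemma lemmaM' {k j : ℕ} (hk : 0 < k) (hj1 : 1 ≤ j) (hjk : j ≤ k) (z : Fin k → ℝ)
    (hz0 : ∀ i, 0 < z i) (hz1 : ∀ i, z i ≤ 1) :
    ∑ S ∈ (Finset.univ : Finset (Fin k)).powersetCard j, ∏ i ∈ S, z i
      ≤ (k.choose j : ℝ) * ∏ i, (((j : ℝ) / k) * z i + (1 - (j : ℝ) / k)) := by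
  have hkk : (0:ℝ) < k := by exact_mod_cast lt_of_lt_of_le hj1 hjk
  -- rewrite each term via complement
  have hstep : ∀ S ∈ (Finset.univ : Finset (Fin k)).powersetCard j,
      ∏ i ∈ S, z i = (∏ i, z i) * ∏ i ∈ Sᶜ, (z i)⁻¹ := by
    intro S _
    have hsplit : (∏ i, z i) = (∏ i ∈ S, z i) * ∏ i ∈ Sᶜ, z i :=
      (Finset.prod_mul_prod_compl S z).symm
    rw [hsplit, mul_assoc, ← Finset.prod_mul_distrib]
    have : ∀ i ∈ Sᶜ, z i * (z i)⁻¹ = 1 := fun i _ => mul_inv_cancel₀ (hz0 i).ne'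
    rw [Finset.prod_congr rfl this, Finset.prod_const_one, mul_one]
  rw [Finset.sum_congr rfl hstep, ← Finset.mul_sum]
  -- reindex by complement
  have hre : ∑ S ∈ (Finset.univ : Finset (Fin k)).powersetCard j, ∏ i ∈ Sᶜ, (z i)⁻¹
      = ∑ T ∈ (Finset.univ : Finset (Fin k)).powersetCard (k - j), ∏ i ∈ T, (z i)⁻¹ := by
    apply Finset.sum_nbij' (fun S => Sᶜ) (fun T => Tᶜ)
    · intro S hS
      simp only [mem_powersetCard, subset_univ, true_and] at hS ⊢
      rw [card_compl, Fintype.card_fin, hS]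
    · intro T hT
      simp only [mem_powersetCard, subset_univ, true_and] at hT ⊢
      rw [card_compl, Fintype.card_fin, hT]
      omega
    · intro S _; simp
    · intro T _; simp
    · intro S _; rfl
  rw [hre]
  have hinv : ∀ i, 1 ≤ (z i)⁻¹ := fun i => (one_le_inv₀ (hz0 i)).mpr (hz1 i)
  have hM := lemmaM (j := k - j) (by exact_mod_cast hkk) (by omega) (fun i => (z i)⁻¹) hinv
  have hprodpos : (0:ℝ) < ∏ i, z i := Finset.prod_pos (fun i _ => hz0 i)
  calc (∏ i, z i) * ∑ T ∈ (Finset.univ : Finset (Fin k)).powersetCard (k - j), ∏ i ∈ T, (z i)⁻¹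
      ≤ (∏ i, z i) * ((k.choose (k - j) : ℝ) *
          ∏ i, (((k - j : ℕ) : ℝ) / k * (z i)⁻¹ + (1 - ((k - j : ℕ) : ℝ) / k))) := by
        exact mul_le_mul_of_nonneg_left hM hprodpos.le
    _ = (k.choose j : ℝ) * ∏ i, (((j : ℝ) / k) * z i + (1 - (j : ℝ) / k)) := by
        rw [Nat.choose_symm hjk]
        rw [mul_left_comm, ← Finset.prod_mul_distrib]
        congr 1
        apply Finset.prod_congr rfl
        intro i _
        have hcast : ((k - j : ℕ) : ℝ) = (k : ℝ) - j := by
          push_cast [hjk]; ring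
        rw [hcast]
        field_simp [(hz0 i).ne']
        ring

lemma sum_conv {k j : ℕ} (f : Finset (Fin k) → ℝ) :
    ∑ b ∈ ((Finset.univ : Finset (Fin k → Bool)).filter
        fun b => (Finset.univ.filter fun i => b i).card = j), f (Finset.univ.filter fun i => b i)
      = ∑ S ∈ (Finset.univ : Finset (Fin k)).powersetCard j, f S := by
  apply Finset.sum_nbij' (i := fun b => Finset.univ.filter fun i => b i)
    (j := fun S => fun i => decide (i ∈ S))
  · intro b hb
    simp only [mem_filter, mem_univ, true_and] at hb
    simp [mem_powersetCard, hb]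
  · intro S hS
    simp only [mem_powersetCard, subset_univ, true_and] at hS
    simp only [mem_filter, mem_univ, true_and]
    rw [← hS]
    congr 1
    ext i
    simp
  · intro b _
    funext i
    simp
  · intro S _
    ext i
    simp
  · intro b _
    rfl

lemma card_A {k j : ℕ} :
    ((Finset.univ : Finset (Fin k → Bool)).filter
        fun b => (Finset.univ.filter fun i => b i).card = j).card = k.choose j := by
  have h := sum_conv (k := k) (j := j) (fun _ => (1 : ℝ))
  simp only [Finset.sum_const, nsmul_eq_mul, mul_one] at h
  have : ((Finset.univ : Finset (Fin k)).powersetCard j).card = k.choose j := by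
    rw [card_powersetCard, card_univ, Fintype.card_fin]
  rw [← this]
  exact_mod_cast h

lemma chernoff_count {α : Type*} [DecidableEq α] (A : Finset α) (p : α → Prop) [DecidablePred p]
    (f : α → ℝ) (s : ℝ) (hp : ∀ b ∈ A, p b → s ≤ f b) :
    ((A.filter p).card : ℝ) ≤ Real.exp (-s) * ∑ b ∈ A, Real.exp (f b) := by
  have h1 : ((A.filter p).card : ℝ) * Real.exp s ≤ ∑ b ∈ A, Real.exp (f b) := by
    calc ((A.filter p).card : ℝ) * Real.exp s = ∑ _b ∈ A.filter p, Real.exp s := by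
          rw [Finset.sum_const, nsmul_eq_mul]
      _ ≤ ∑ b ∈ A.filter p, Real.exp (f b) := by
          apply Finset.sum_le_sum
          intro b hb
          simp only [mem_filter] at hb
          exact Real.exp_le_exp.mpr (hp b hb.1 hb.2)
      _ ≤ ∑ b ∈ A, Real.exp (f b) :=
          Finset.sum_le_sum_of_subset_of_nonneg (Finset.filter_subset _ _)
            (fun b _ _ => (Real.exp_pos _).le)
  rw [Real.exp_neg, inv_mul_eq_div, le_div_iff₀ (Real.exp_pos s)]
  exact h1

/-- combined mgf bound -/
lemma mgf_bound {k j : ℕ} (hk : 0 < k) (hj1 : 1 ≤ j) (hjk : j < k) (c : Fin k → ℝ)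
    (hc : (∀ i, c i ≤ 0) ∨ (∀ i, 0 ≤ c i)) :
    ∑ S ∈ (Finset.univ : Finset (Fin k)).powersetCard j, Real.exp (∑ i ∈ S, c i)
      ≤ (k.choose j : ℝ) * Real.exp (((j : ℝ) / k) * ∑ i, c i + (∑ i, (c i) ^ 2) / 4) := by
  set μ : ℝ := (j : ℝ) / k with hμ
  have hk' : (0:ℝ) < k := by exact_mod_cast hk
  have hμ0 : 0 ≤ μ := by positivity
  have hμ1 : μ ≤ 1 := by
    rw [hμ, div_le_one hk']
    exact_mod_cast hjk.le
  have hz : ∀ S ∈ (Finset.univ : Finset (Fin k)).powersetCard j,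
      Real.exp (∑ i ∈ S, c i) = ∏ i ∈ S, Real.exp (c i) := fun S _ => Real.exp_sum S c
  rw [Finset.sum_congr rfl hz]
  have hstep1 : ∑ S ∈ (Finset.univ : Finset (Fin k)).powersetCard j, ∏ i ∈ S, Real.exp (c i)
      ≤ (k.choose j : ℝ) * ∏ i, (μ * Real.exp (c i) + (1 - μ)) := by
    rcases hc with hc | hc
    · exact lemmaM' hk hj1 hjk.le _ (fun i => Real.exp_pos _)
        (fun i => Real.exp_le_one_iff.mpr (hc i))
    · exact lemmaM hk hjk _ (fun i => Real.one_le_exp (hc i))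
  refine hstep1.trans ?_
  apply mul_le_mul_of_nonneg_left _ (by positivity)
  calc ∏ i, (μ * Real.exp (c i) + (1 - μ))
      ≤ ∏ i, Real.exp (μ * c i + (c i) ^ 2 / 4) := by
        apply Finset.prod_le_prod
        · intro i _
          have := (Real.exp_pos (c i)).le
          nlinarith
        · intro i _
          exact hoeff14 hμ0 hμ1 (c i)
    _ = Real.exp (μ * ∑ i, c i + (∑ i, (c i) ^ 2) / 4) := by
        rw [← Real.exp_sum]
        congr 1
        rw [Finset.sum_add_distrib, Finset.mul_sum, ← Finset.sum_div]

lemma tail_core {k j : ℕ} (hk : 0 < k) (hj1 : 1 ≤ j) (hjk : j < k)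
    (g : Fin k → ℝ) (hg : ∀ i, 0 ≤ g i) (sgn : ℝ) (hsgn : sgn = 1 ∨ sgn = -1)
    (t : ℝ) (ht : 0 < t) (hσ : 0 < ∑ i, (g i) ^ 2) :
    ((((Finset.univ : Finset (Fin k → Bool)).filter
          fun b => (Finset.univ.filter fun i => b i).card = j).filter
        (fun b => t ≤ sgn * ((∑ i, (if b i then 2 * g i else 0))
            - 2 * ((j : ℝ) / k) * ∑ i, g i))).card : ℝ)
      ≤ (k.choose j : ℝ) * Real.exp (-t ^ 2 / (4 * ∑ i, (g i) ^ 2)) := by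
  set μ : ℝ := (j : ℝ) / k with hμ
  set σ2 : ℝ := ∑ i, (g i) ^ 2 with hσ2
  set lam : ℝ := t / (2 * σ2) with hlam
  have hlampos : 0 < lam := by positivity
  set c : Fin k → ℝ := fun i => sgn * (2 * lam) * g i with hc
  have hsq : sgn ^ 2 = 1 := by rcases hsgn with h | h <;> rw [h] <;> norm_num
  -- event implies s ≤ f b
  set s : ℝ := lam * t + sgn * (2 * lam) * μ * ∑ i, g i with hs
  have hch := chernoff_count ((Finset.univ : Finset (Fin k → Bool)).filter
          fun b => (Finset.univ.filter fun i => b i).card = j)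
      (fun b => t ≤ sgn * ((∑ i, (if b i then 2 * g i else 0)) - 2 * μ * ∑ i, g i))
      (fun b => ∑ i, (if b i then c i else 0)) s ?_
  · refine hch.trans ?_
    -- now bound the sum
    have hconv : ∑ b ∈ ((Finset.univ : Finset (Fin k → Bool)).filter
          fun b => (Finset.univ.filter fun i => b i).card = j),
        Real.exp (∑ i, (if b i then c i else 0))
        = ∑ S ∈ (Finset.univ : Finset (Fin k)).powersetCard j, Real.exp (∑ i ∈ S, c i) := by
      have h1 : ∀ b : Fin k → Bool, (∑ i, (if b i then c i else 0))
          = ∑ i ∈ Finset.univ.filter (fun i => b i), c i := by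
        intro b
        rw [Finset.sum_filter]
      simp only [h1]
      exact sum_conv (fun S => Real.exp (∑ i ∈ S, c i))
    rw [hconv]
    have hmgf := mgf_bound hk hj1 hjk c ?_
    · have hsum1 : ∑ i, c i = sgn * (2 * lam) * ∑ i, g i := by
        rw [hc, ← Finset.mul_sum]
      have hsum2 : ∑ i, (c i) ^ 2 = 4 * lam ^ 2 * σ2 := by
        rw [hσ2, Finset.mul_sum]
        apply Finset.sum_congr rfl
        intro i _
        have h2 : (c i) ^ 2 = sgn ^ 2 * (4 * lam ^ 2 * (g i) ^ 2) := by rw [hc]; ring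
        rw [h2, hsq]; ring
      calc Real.exp (-s) * ∑ S ∈ (Finset.univ : Finset (Fin k)).powersetCard j,
            Real.exp (∑ i ∈ S, c i)
          ≤ Real.exp (-s) * ((k.choose j : ℝ)
              * Real.exp (μ * ∑ i, c i + (∑ i, (c i) ^ 2) / 4)) :=
            mul_le_mul_of_nonneg_left hmgf (Real.exp_pos _).le
        _ = (k.choose j : ℝ) * (Real.exp (-s)
              * Real.exp (μ * ∑ i, c i + (∑ i, (c i) ^ 2) / 4)) := by ring
        _ = (k.choose j : ℝ) * Real.exp (-s + (μ * ∑ i, c i + (∑ i, (c i) ^ 2) / 4)) := by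
            rw [← Real.exp_add]
        _ = (k.choose j : ℝ) * Real.exp (-t ^ 2 / (4 * σ2)) := by
            congr 1
            rw [hsum1, hsum2, hs]
            have : -(lam * t + sgn * (2 * lam) * μ * ∑ i, g i)
                + (μ * (sgn * (2 * lam) * ∑ i, g i) + 4 * lam ^ 2 * σ2 / 4)
                = -lam * t + lam ^ 2 * σ2 := by ring
            rw [this, hlam]
            field_simp
            ring
    · rcases hsgn with h | h
      · right; intro i; show 0 ≤ sgn * (2 * lam) * g i; rw [h]
        nlinarith [mul_nonneg hlampos.le (hg i)]
      · left; intro i; show sgn * (2 * lam) * g i ≤ 0; rw [h]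
        nlinarith [mul_nonneg hlampos.le (hg i)]
  · intro b _ hb
    have hfb : (∑ i, (if b i then c i else 0))
        = sgn * lam * ∑ i, (if b i then 2 * g i else 0) := by
      rw [Finset.mul_sum]
      apply Finset.sum_congr rfl
      intro i _
      rw [hc]
      by_cases h : b i <;> simp [h] <;> ring
    show s ≤ ∑ i, (if b i then c i else 0)
    rw [hfb, hs]
    have := mul_le_mul_of_nonneg_left hb hlampos.le
    calc lam * t + sgn * (2 * lam) * μ * ∑ i, g i
        ≤ lam * (sgn * ((∑ i, (if b i then 2 * g i else 0)) - 2 * μ * ∑ i, g i))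
          + sgn * (2 * lam) * μ * ∑ i, g i := by linarith
      _ = sgn * lam * ∑ i, (if b i then 2 * g i else 0) := by ring

end Stmt19Aux

open Finset in
set_option maxHeartbeats 1000000 in
/-- Hoeffding-type bound for sampling without replacement. Let β_i ≥ 0,
|γ_i| ≤ β_i, j ∈ {1,…,⌊k/2⌋}, μ = j/k, α_i = β_i + |γ_i| with Σ α_i = 1. For (X₁,…,X_k)
uniform on the sign vectors with exactly μ·k = j coordinates equal to +1 (encoded by
b : Fin k → Bool with X_i = 1 if b i else −1) and Y_i = β_i + X_i·γ_i, for every ε > 0,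
P[Σ Y_i ≤ μ − ε] ≤ 2·exp(−ε²/(2·Σ α_i²)). -/
theorem stmt19 (k : ℕ) (hk : 2 ≤ k) (β γ : Fin k → ℝ)
    (hβ : ∀ i, 0 ≤ β i) (hγ : ∀ i, |γ i| ≤ β i)
    (j : ℕ) (hj1 : 1 ≤ j) (hj2 : j ≤ k / 2)
    (hsum : ∑ i, (β i + |γ i|) = 1) (ε : ℝ) (hε : 0 < ε) :
    ((Finset.univ.filter (fun b : Fin k → Bool =>
        (Finset.univ.filter (fun i => b i)).card = j ∧
        ∑ i, (β i + (if b i then (1 : ℝ) else -1) * γ i) ≤ (j : ℝ) / k - ε)).card : ℝ) ≤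
      2 * Real.exp (-ε ^ 2 / (2 * ∑ i, (β i + |γ i|) ^ 2)) *
        ((Finset.univ.filter (fun b : Fin k → Bool =>
          (Finset.univ.filter (fun i => b i)).card = j)).card : ℝ) := by
  classical
  have hk0 : 0 < k := by omega
  have hjk : j < k := by omega
  have h2j : 2 * j ≤ k := by omega
  have hk' : (0:ℝ) < k := by exact_mod_cast hk0
  set μ : ℝ := (j : ℝ) / k with hμdef
  have hμ0 : 0 ≤ μ := by positivity
  have hμhalf : μ ≤ 1 / 2 := by
    rw [hμdef, div_le_div_iff₀ hk' (by norm_num : (0:ℝ) < 2)]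
    have : (2 * j : ℝ) ≤ k := by exact_mod_cast h2j
    linarith
  set gp : Fin k → ℝ := fun i => max (γ i) 0 with hgpdef
  set gm : Fin k → ℝ := fun i => max (-γ i) 0 with hgmdef
  have hgp0 : ∀ i, 0 ≤ gp i := fun i => le_max_right _ _
  have hgm0 : ∀ i, 0 ≤ gm i := fun i => le_max_right _ _
  have hdiff : ∀ i, gp i - gm i = γ i := by
    intro i
    rcases le_total (γ i) 0 with h | h
    · simp [hgpdef, hgmdef, max_eq_right h, max_eq_left (by linarith : 0 ≤ -γ i)]
    · simp [hgpdef, hgmdef, max_eq_left h, max_eq_right (by linarith : -γ i ≤ 0)]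
  have habs : ∀ i, gp i + gm i = |γ i| := by
    intro i
    rcases le_total (γ i) 0 with h | h
    · simp [hgpdef, hgmdef, max_eq_right h, max_eq_left (by linarith : 0 ≤ -γ i),
        abs_of_nonpos h]
    · simp [hgpdef, hgmdef, max_eq_left h, max_eq_right (by linarith : -γ i ≤ 0),
        abs_of_nonneg h]
  have hsqi : ∀ i, (gp i) ^ 2 + (gm i) ^ 2 = (γ i) ^ 2 := by
    intro i
    rcases le_total (γ i) 0 with h | h
    · simp [hgpdef, hgmdef, max_eq_right h, max_eq_left (by linarith : 0 ≤ -γ i)]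
    · simp [hgpdef, hgmdef, max_eq_left h, max_eq_right (by linarith : -γ i ≤ 0)]
  set σp2 : ℝ := ∑ i, (gp i) ^ 2 with hσp2def
  set σm2 : ℝ := ∑ i, (gm i) ^ 2 with hσm2def
  set A2 : ℝ := ∑ i, (β i + |γ i|) ^ 2 with hA2def
  have hσp2nn : 0 ≤ σp2 := Finset.sum_nonneg fun i _ => sq_nonneg _
  have hσm2nn : 0 ≤ σm2 := Finset.sum_nonneg fun i _ => sq_nonneg _
  have hA2ge : 4 * (σp2 + σm2) ≤ A2 := by
    have hsplit2 : σp2 + σm2 = ∑ i, ((gp i) ^ 2 + (gm i) ^ 2) := by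
      rw [hσp2def, hσm2def, Finset.sum_add_distrib]
    rw [hsplit2, hA2def, Finset.mul_sum]
    apply Finset.sum_le_sum
    intro i _
    rw [hsqi i]
    have h1 := hγ i
    have h2 := abs_nonneg (γ i)
    have h3 : (γ i) ^ 2 = |γ i| ^ 2 := (sq_abs _).symm
    nlinarith
  have hA2pos : 0 < A2 := by
    rcases (Finset.sum_nonneg fun i (_ : i ∈ Finset.univ) =>
        sq_nonneg (β i + |γ i|)).eq_or_lt with h | h
    · exfalso
      have hall : ∀ i ∈ Finset.univ, (β i + |γ i|) ^ 2 = 0 := by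
        intro i hi
        have := (Finset.sum_eq_zero_iff_of_nonneg
          (fun i _ => sq_nonneg (β i + |γ i|))).mp h.symm
        exact this i hi
      have : ∑ i, (β i + |γ i|) = 0 := by
        apply Finset.sum_eq_zero
        intro i hi
        exact pow_eq_zero_iff (by norm_num) |>.mp (hall i hi)
      rw [hsum] at this
      norm_num at this
    · exact h
  -- event rewriting
  have hrw : ∀ b : Fin k → Bool, ∑ i, (β i + (if b i then (1:ℝ) else -1) * γ i)
      = (∑ i, β i) - (∑ i, γ i) + ((∑ i, (if b i then 2 * gp i else 0))
          - (∑ i, (if b i then 2 * gm i else 0))) := by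
    intro b
    have hpt : ∀ i : Fin k, β i + (if b i then (1:ℝ) else -1) * γ i
        = (β i - γ i) + ((if b i then 2 * gp i else 0) - (if b i then 2 * gm i else 0)) := by
      intro i
      by_cases h : b i <;> simp [h] <;> linarith [hdiff i]
    rw [Finset.sum_congr rfl (fun i _ => hpt i), Finset.sum_add_distrib,
      Finset.sum_sub_distrib, Finset.sum_sub_distrib]
    try ring
  have hGsplit : ∑ i, γ i = (∑ i, gp i) - (∑ i, gm i) := by
    rw [← Finset.sum_sub_distrib]
    exact (Finset.sum_congr rfl fun i _ => (hdiff i).symm)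
  have hmean : μ ≤ (∑ i, β i) - (∑ i, γ i) + 2 * μ * (∑ i, γ i) := by
    have hGGa : (∑ i, γ i) ≤ ∑ i, |γ i| := Finset.sum_le_sum fun i _ => le_abs_self _
    have hGaB : (∑ i, |γ i|) ≤ ∑ i, β i := Finset.sum_le_sum fun i _ => hγ i
    have hBGa : (∑ i, β i) + (∑ i, |γ i|) = 1 := by
      rw [← Finset.sum_add_distrib]; exact hsum
    set B := ∑ i, β i
    set G := ∑ i, γ i
    set Ga := ∑ i, |γ i|
    have h1 : 0 ≤ (1 - 2 * μ) * (Ga - G) := by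
      apply mul_nonneg <;> linarith
    have h2 : 0 ≤ (1 - μ) * (B - Ga) := by
      apply mul_nonneg <;> linarith
    nlinarith
  -- main event implication
  have hev : ∀ b : Fin k → Bool,
      (∑ i, (β i + (if b i then (1:ℝ) else -1) * γ i) ≤ μ - ε) →
      ((∑ i, (if b i then 2 * gp i else 0)) - 2 * μ * ∑ i, gp i)
        - ((∑ i, (if b i then 2 * gm i else 0)) - 2 * μ * ∑ i, gm i) ≤ -ε := by
    intro b hb
    rw [hrw b] at hb
    have : 2 * μ * (∑ i, γ i) = 2 * μ * ∑ i, gp i - 2 * μ * ∑ i, gm i := by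
      rw [hGsplit]; ring
    linarith [hmean]
  -- restate goal with filter_filter
  rw [← Finset.filter_filter]
  set A' := (Finset.univ : Finset (Fin k → Bool)).filter
      fun b => (Finset.univ.filter fun i => b i).card = j with hA'def
  have hN : (A'.card : ℝ) = (k.choose j : ℝ) := by
    rw [hA'def]
    exact_mod_cast (card_A (k := k) (j := j))
  have hexpnn : 0 ≤ Real.exp (-ε ^ 2 / (2 * A2)) := (Real.exp_pos _).le
  have hNnn : (0:ℝ) ≤ (k.choose j : ℝ) := by positivity
  -- the two sub-tail events
  by_cases hσp : 0 < σp2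
  · by_cases hσm : 0 < σm2
    · -- both positive
      set sp := Real.sqrt σp2 with hspdef
      set sm := Real.sqrt σm2 with hsmdef
      have hsp : 0 < sp := Real.sqrt_pos.mpr hσp
      have hsm : 0 < sm := Real.sqrt_pos.mpr hσm
      have hsp2 : sp ^ 2 = σp2 := Real.sq_sqrt hσp.le
      have hsm2 : sm ^ 2 = σm2 := Real.sq_sqrt hσm.le
      have hS : 0 < sp + sm := by linarith
      set tp := sp * ε / (sp + sm) with htpdef
      set tm := sm * ε / (sp + sm) with htmdef
      have htp : 0 < tp := by positivity
      have htm : 0 < tm := by positivity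
      have htsum : tp + tm = ε := by
        rw [htpdef, htmdef]
        field_simp
      have hsub : A'.filter (fun b =>
            ∑ i, (β i + (if b i then (1:ℝ) else -1) * γ i) ≤ μ - ε)
          ⊆ (A'.filter (fun b => tp ≤ (-1) * ((∑ i, (if b i then 2 * gp i else 0))
                - 2 * μ * ∑ i, gp i)))
            ∪ (A'.filter (fun b => tm ≤ (1:ℝ) * ((∑ i, (if b i then 2 * gm i else 0))
                - 2 * μ * ∑ i, gm i))) := by
        intro b hb
        rw [Finset.mem_filter] at hb
        obtain ⟨hbA, hbE⟩ := hb
        have h := hev b hbE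
        by_cases h1 : tp ≤ (-1) * ((∑ i, (if b i then 2 * gp i else 0)) - 2 * μ * ∑ i, gp i)
        · exact Finset.mem_union_left _ (Finset.mem_filter.mpr ⟨hbA, h1⟩)
        · refine Finset.mem_union_right _ (Finset.mem_filter.mpr ⟨hbA, ?_⟩)
          rw [not_le] at h1
          linarith
      have hb1 := tail_core hk0 hj1 hjk gp hgp0 (-1) (Or.inr rfl) tp htp hσp
      have hb2 := tail_core hk0 hj1 hjk gm hgm0 1 (Or.inl rfl) tm htm hσm
      have hcard : ((A'.filter (fun b =>
            ∑ i, (β i + (if b i then (1:ℝ) else -1) * γ i) ≤ μ - ε)).card : ℝ)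
          ≤ (k.choose j : ℝ) * Real.exp (-tp ^ 2 / (4 * σp2))
            + (k.choose j : ℝ) * Real.exp (-tm ^ 2 / (4 * σm2)) := by
        have hc1 := Finset.card_le_card hsub
        have hc2 := Finset.card_union_le
          (A'.filter (fun b => tp ≤ (-1) * ((∑ i, (if b i then 2 * gp i else 0))
                - 2 * μ * ∑ i, gp i)))
          (A'.filter (fun b => tm ≤ (1:ℝ) * ((∑ i, (if b i then 2 * gm i else 0))
                - 2 * μ * ∑ i, gm i)))
        have : ((A'.filter (fun b =>
            ∑ i, (β i + (if b i then (1:ℝ) else -1) * γ i) ≤ μ - ε)).card : ℝ)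
            ≤ ((A'.filter (fun b => tp ≤ (-1) * ((∑ i, (if b i then 2 * gp i else 0))
                - 2 * μ * ∑ i, gp i))).card : ℝ)
              + ((A'.filter (fun b => tm ≤ (1:ℝ) * ((∑ i, (if b i then 2 * gm i else 0))
                - 2 * μ * ∑ i, gm i))).card : ℝ) := by
          exact_mod_cast le_trans hc1 hc2
        exact le_trans this (add_le_add hb1 hb2)
      -- exponent comparisons
      have hcomp : ∀ t s2 : ℝ, 0 < s2 → t = Real.sqrt s2 * ε / (sp + sm) →
          Real.exp (-t ^ 2 / (4 * s2)) ≤ Real.exp (-ε ^ 2 / (2 * A2)) := by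
        intro t s2 hs2 ht
        apply Real.exp_le_exp.mpr
        have hts : t ^ 2 = s2 * ε ^ 2 / (sp + sm) ^ 2 := by
          rw [ht]
          rw [div_pow, mul_pow, Real.sq_sqrt hs2.le]
        have h1 : t ^ 2 / (4 * s2) = ε ^ 2 / (4 * (sp + sm) ^ 2) := by
          rw [hts]
          field_simp
        have hd : (0:ℝ) < 4 * (sp + sm) ^ 2 := by positivity
        have hkey : 4 * (sp + sm) ^ 2 ≤ 2 * A2 := by
          have hab : 2 * (sp * sm) ≤ σp2 + σm2 := by
            nlinarith only [sq_nonneg (sp - sm), hsp2, hsm2]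
          have hexp2 : (sp + sm) ^ 2 = σp2 + 2 * (sp * sm) + σm2 := by
            rw [← hsp2, ← hsm2]; ring
          linarith only [hab, hexp2, hA2ge]
        have h2 : ε ^ 2 / (2 * A2) ≤ ε ^ 2 / (4 * (sp + sm) ^ 2) :=
          (div_le_div_iff_of_pos_left (by positivity) (by positivity) hd).mpr hkey
        rw [neg_div, neg_div, h1]
        linarith
      have hcp := hcomp tp σp2 hσp htpdef
      have hcm := hcomp tm σm2 hσm htmdef
      calc ((A'.filter (fun b =>
            ∑ i, (β i + (if b i then (1:ℝ) else -1) * γ i) ≤ μ - ε)).card : ℝ)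
          ≤ (k.choose j : ℝ) * Real.exp (-tp ^ 2 / (4 * σp2))
            + (k.choose j : ℝ) * Real.exp (-tm ^ 2 / (4 * σm2)) := hcard
        _ ≤ (k.choose j : ℝ) * Real.exp (-ε ^ 2 / (2 * A2))
            + (k.choose j : ℝ) * Real.exp (-ε ^ 2 / (2 * A2)) := by
            apply add_le_add <;> exact mul_le_mul_of_nonneg_left (by assumption) hNnn
        _ = 2 * Real.exp (-ε ^ 2 / (2 * A2)) * (A'.card : ℝ) := by rw [hN]; ring
    · -- σm2 = 0
      have hσm0 : σm2 = 0 := le_antisymm (not_lt.mp hσm) hσm2nn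
      have hgmz : ∀ i, gm i = 0 := by
        intro i
        have := (Finset.sum_eq_zero_iff_of_nonneg
          (fun i (_ : i ∈ Finset.univ) => sq_nonneg (gm i))).mp hσm0 i (Finset.mem_univ i)
        exact pow_eq_zero_iff (by norm_num) |>.mp this
      have hVz : ∀ b : Fin k → Bool, (∑ i, (if b i then 2 * gm i else 0)) = 0 := by
        intro b
        apply Finset.sum_eq_zero
        intro i _
        rw [hgmz i]
        simp
      have hsub : A'.filter (fun b =>
            ∑ i, (β i + (if b i then (1:ℝ) else -1) * γ i) ≤ μ - ε)
          ⊆ A'.filter (fun b => ε ≤ (-1) * ((∑ i, (if b i then 2 * gp i else 0))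
                - 2 * μ * ∑ i, gp i)) := by
        intro b hb
        rw [Finset.mem_filter] at hb ⊢
        refine ⟨hb.1, ?_⟩
        have h := hev b hb.2
        have hVb := hVz b
        have hsgm : ∑ i, gm i = 0 := Finset.sum_eq_zero fun i _ => hgmz i
        rw [hVb, hsgm] at h
        linarith
      have hb1 := tail_core hk0 hj1 hjk gp hgp0 (-1) (Or.inr rfl) ε hε hσp
      have hcomp : Real.exp (-ε ^ 2 / (4 * σp2)) ≤ Real.exp (-ε ^ 2 / (2 * A2)) := by
        apply Real.exp_le_exp.mpr
        rw [div_le_div_iff₀ (by positivity) (by positivity)]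
        nlinarith [sq_nonneg ε]
      calc ((A'.filter (fun b =>
            ∑ i, (β i + (if b i then (1:ℝ) else -1) * γ i) ≤ μ - ε)).card : ℝ)
          ≤ ((A'.filter (fun b => ε ≤ (-1) * ((∑ i, (if b i then 2 * gp i else 0))
                - 2 * μ * ∑ i, gp i))).card : ℝ) := by
            exact_mod_cast Finset.card_le_card hsub
        _ ≤ (k.choose j : ℝ) * Real.exp (-ε ^ 2 / (4 * σp2)) := hb1
        _ ≤ (k.choose j : ℝ) * Real.exp (-ε ^ 2 / (2 * A2)) :=
            mul_le_mul_of_nonneg_left hcomp hNnn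
        _ ≤ 2 * Real.exp (-ε ^ 2 / (2 * A2)) * (A'.card : ℝ) := by
            rw [hN]; nlinarith [hexpnn, hNnn, mul_nonneg hexpnn hNnn]
  · -- σp2 = 0
    have hσp0 : σp2 = 0 := le_antisymm (not_lt.mp hσp) hσp2nn
    have hgpz : ∀ i, gp i = 0 := by
      intro i
      have := (Finset.sum_eq_zero_iff_of_nonneg
        (fun i (_ : i ∈ Finset.univ) => sq_nonneg (gp i))).mp hσp0 i (Finset.mem_univ i)
      exact pow_eq_zero_iff (by norm_num) |>.mp this
    have hUz : ∀ b : Fin k → Bool, (∑ i, (if b i then 2 * gp i else 0)) = 0 := by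
      intro b
      apply Finset.sum_eq_zero
      intro i _
      rw [hgpz i]
      simp
    have hsgp : ∑ i, gp i = 0 := Finset.sum_eq_zero fun i _ => hgpz i
    by_cases hσm : 0 < σm2
    · have hsub : A'.filter (fun b =>
            ∑ i, (β i + (if b i then (1:ℝ) else -1) * γ i) ≤ μ - ε)
          ⊆ A'.filter (fun b => ε ≤ (1:ℝ) * ((∑ i, (if b i then 2 * gm i else 0))
                - 2 * μ * ∑ i, gm i)) := by
        intro b hb
        rw [Finset.mem_filter] at hb ⊢
        refine ⟨hb.1, ?_⟩
        have h := hev b hb.2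
        rw [hUz b, hsgp] at h
        linarith
      have hb2 := tail_core hk0 hj1 hjk gm hgm0 1 (Or.inl rfl) ε hε hσm
      have hcomp : Real.exp (-ε ^ 2 / (4 * σm2)) ≤ Real.exp (-ε ^ 2 / (2 * A2)) := by
        apply Real.exp_le_exp.mpr
        rw [div_le_div_iff₀ (by positivity) (by positivity)]
        nlinarith [sq_nonneg ε]
      calc ((A'.filter (fun b =>
            ∑ i, (β i + (if b i then (1:ℝ) else -1) * γ i) ≤ μ - ε)).card : ℝ)
          ≤ ((A'.filter (fun b => ε ≤ (1:ℝ) * ((∑ i, (if b i then 2 * gm i else 0))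
                - 2 * μ * ∑ i, gm i))).card : ℝ) := by
            exact_mod_cast Finset.card_le_card hsub
        _ ≤ (k.choose j : ℝ) * Real.exp (-ε ^ 2 / (4 * σm2)) := hb2
        _ ≤ (k.choose j : ℝ) * Real.exp (-ε ^ 2 / (2 * A2)) :=
            mul_le_mul_of_nonneg_left hcomp hNnn
        _ ≤ 2 * Real.exp (-ε ^ 2 / (2 * A2)) * (A'.card : ℝ) := by
            rw [hN]; nlinarith [hexpnn, hNnn, mul_nonneg hexpnn hNnn]
    · -- both zero: γ ≡ 0, event empty
      have hσm0 : σm2 = 0 := le_antisymm (not_lt.mp hσm) hσm2nn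
      have hgmz : ∀ i, gm i = 0 := by
        intro i
        have := (Finset.sum_eq_zero_iff_of_nonneg
          (fun i (_ : i ∈ Finset.univ) => sq_nonneg (gm i))).mp hσm0 i (Finset.mem_univ i)
        exact pow_eq_zero_iff (by norm_num) |>.mp this
      have hγz : ∀ i, γ i = 0 := by
        intro i
        rw [← hdiff i, hgpz i, hgmz i]
        ring
      have hB1 : ∑ i, β i = 1 := by
        rw [← hsum]
        apply Finset.sum_congr rfl
        intro i _
        rw [hγz i]
        simp
      have hempty : A'.filter (fun b =>
            ∑ i, (β i + (if b i then (1:ℝ) else -1) * γ i) ≤ μ - ε) = ∅ := by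
        apply Finset.filter_false_of_mem
        intro b _
        rw [hrw b]
        have hVz : (∑ i, (if b i then 2 * gm i else 0)) = 0 :=
          Finset.sum_eq_zero fun i _ => by rw [hgmz i]; simp
        have hUz' := hUz b
        have hGz : ∑ i, γ i = 0 := Finset.sum_eq_zero fun i _ => hγz i
        rw [hUz', hVz, hGz, hB1]
        push_neg
        linarith
      rw [hempty]
      simp only [Finset.card_empty, Nat.cast_zero]
      positivity
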